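/- Any RAF (X, R, F) that is not itself a CAF possesses a reaction subset R* ⊆ R and species subset X* ⊆ X(R*) \ F such that the subnetwork (X(R*), R*, X(R*) \ X*) with enlarged food set F* = X(R*) \ X* is itself a RAF, and the stoichiometric submatrix S[X*, R*] is square, well-formed, and semipositive. -/

import Mathlib

/-- A reaction network with an F-decomposition of its stoichiometric
coefficients: reactant coefficients `sm` and product coefficients `sp` are
decomposed as `sm = σm + k` (F-reactant part plus F-catalyst part) and
`sp = σp + k`, all nonnegative. -/
structure RNet (X R : Type*) where
  sm : X → R → ℝ
  sp : X → R → ℝ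
  σm : X → R → ℝ
  σp : X → R → ℝ
  k : X → R → ℝ
  σm_nonneg : ∀ x r, 0 ≤ σm x r
  σp_nonneg : ∀ x r, 0 ≤ σp x r
  k_nonneg : ∀ x r, 0 ≤ k x r
  sm_eq : ∀ x r, σm x r + k x r = sm x r
  sp_eq : ∀ x r, σp x r + k x r = sp x r

namespace RNet

variable {X R : Type*} (N : RNet X R)

/-- `x` is a reactant of `r`. -/
def reactant (x : X) (r : R) : Prop := 0 < N.sm x r

/-- `x` is a product of `r`. -/
def product (x : X) (r : R) : Prop := 0 < N.sp x r

/-- `x` is an F-reactant of `r`. -/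
def Freactant (x : X) (r : R) : Prop := 0 < N.σm x r

/-- `x` is an F-product of `r`. -/
def Fproduct (x : X) (r : R) : Prop := 0 < N.σp x r

/-- `x` is an F-catalyst of `r`. -/
def Fcatalyst (x : X) (r : R) : Prop := 0 < N.k x r

/-- `x` is a net-product of `r`. -/
def netProduct (x : X) (r : R) : Prop := N.sm x r < N.sp x r

/-- The support `X(R')` of a set of reactions: all their reactants and
products. -/
def support (R' : Set R) : Set X := {x | ∃ r ∈ R', N.reactant x r ∨ N.product x r}

/-- The subnetwork obtained by restricting to species `X'` and reactions `R'`. -/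
def sub (X' : Set X) (R' : Set R) : RNet X' R' where
  sm := fun x r => N.sm x r
  sp := fun x r => N.sp x r
  σm := fun x r => N.σm x r
  σp := fun x r => N.σp x r
  k := fun x r => N.k x r
  σm_nonneg := fun x r => N.σm_nonneg x r
  σp_nonneg := fun x r => N.σp_nonneg x r
  k_nonneg := fun x r => N.k_nonneg x r
  sm_eq := fun x r => N.sm_eq x r
  sp_eq := fun x r => N.sp_eq x r

end RNet

/-- Reflexively Autocatalytic Food-generated set (RAF): every reaction has an
F-catalyst (R1); every non-food F-catalyst is an F-product-but-not-F-reactant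
of some reaction (R2); and there is a strict partial order under which every
non-food F-reactant of a reaction is an F-product-but-not-F-reactant of a
strictly earlier reaction (R3). -/
def IsRAF {X R : Type*} (N : RNet X R) (F : Set X) : Prop :=
  (∀ r, ∃ x, N.Fcatalyst x r) ∧
  (∀ r x, N.Fcatalyst x r → x ∉ F →
    ∃ r', N.Fproduct x r' ∧ ¬ N.Freactant x r') ∧
  (∃ prec : R → R → Prop, IsStrictOrder R prec ∧
    ∀ r x, N.Freactant x r → x ∉ F →
      ∃ r', prec r' r ∧ N.Fproduct x r' ∧ ¬ N.Freactant x r')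

/-- Constructively Autocatalytic Food-generated set (CAF): every reaction has an
F-catalyst, and there is a strict partial order under which every non-food
reactant (F-reactant or F-catalyst) of a reaction is an
F-product-but-not-F-reactant of a strictly earlier reaction. -/
def IsCAF {X R : Type*} (N : RNet X R) (F : Set X) : Prop :=
  (∀ r, ∃ x, N.Fcatalyst x r) ∧
  (∃ prec : R → R → Prop, IsStrictOrder R prec ∧
    ∀ r x, (N.Freactant x r ∨ N.Fcatalyst x r) → x ∉ F →
      ∃ r', prec r' r ∧ N.Fproduct x r' ∧ ¬ N.Freactant x r')

namespace RNet

def gsets {X R : Type*} (N : RNet X R) (F : Set X) : ℕ → Set R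
  | 0 => ∅
  | n+1 => {r | ∀ x, x ∉ F → (N.Freactant x r ∨ N.Fcatalyst x r) →
      ∃ r' ∈ gsets N F n, N.Fproduct x r' ∧ ¬ N.Freactant x r'}

lemma gsets_succ_mono {X R : Type*} (N : RNet X R) (F : Set X) :
    ∀ n, N.gsets F n ⊆ N.gsets F (n+1) := by
  intro n
  induction n with
  | zero => simp [gsets]
  | succ n ih =>
    intro r hr
    simp only [gsets, Set.mem_setOf_eq] at hr ⊢
    intro x hx hneed
    obtain ⟨r', hr', h1, h2⟩ := hr x hx hneed
    exact ⟨r', ih hr', h1, h2⟩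

lemma gsets_mono {X R : Type*} (N : RNet X R) (F : Set X) {m n : ℕ} (h : m ≤ n) :
    N.gsets F m ⊆ N.gsets F n := by
  induction h with
  | refl => exact fun _ h => h
  | step _ ih => exact fun r hr => N.gsets_succ_mono F _ (ih hr)

end RNet

/-- Corollary (subRAF): any RAF that is not itself a CAF possesses a reaction
subset `R*` and a species subset `X* ⊆ X(R*) \ F` such that the subnetwork on
`X(R*)` with enlarged food set `F* = X(R*) \ X*` is itself a RAF, and the
stoichiometric submatrix `S[X*, R*]` is square, well-formed and semipositive. -/
theorem stmt18 {X R : Type*} [Fintype X] [Fintype R] (N : RNet X R) (F : Set X)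
    (hRAF : IsRAF N F) (hnCAF : ¬ IsCAF N F) :
    ∃ (Rs : Finset R) (Xs : Finset X),
      Rs.Nonempty ∧
      (∀ x ∈ Xs, x ∈ N.support ↑Rs ∧ x ∉ F) ∧
      IsRAF (N.sub (N.support ↑Rs) ↑Rs)
        {x : ↥(N.support (↑Rs : Set R)) | (x : X) ∉ Xs} ∧
      Xs.card = Rs.card ∧
      (∀ r ∈ Rs, (∃ m ∈ Xs, N.reactant m r) ∧ ∃ n ∈ Xs, N.product n r) ∧
      ∃ v : R → ℝ, (∀ r ∈ Rs, 0 < v r) ∧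
        ∀ m ∈ Xs, 0 < ∑ r ∈ Rs, (N.sp m r - N.sm m r) * v r := by
  classical
  obtain ⟨hR1, hR2, prec, hord, hR3⟩ := hRAF
  -- basic implications between coefficient positivity notions
  have hreact_of : ∀ {x r}, N.Freactant x r ∨ N.Fcatalyst x r → N.reactant x r := by
    intro x r h
    have hs := N.sm_eq x r
    have h1 := N.k_nonneg x r
    have h2 := N.σm_nonneg x r
    unfold RNet.reactant
    rcases h with h | h
    · unfold RNet.Freactant at h; linarith
    · unfold RNet.Fcatalyst at h; linarith
  have hprod_of : ∀ {x r}, N.Fproduct x r → N.product x r := by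
    intro x r h
    have hs := N.sp_eq x r
    have h1 := N.k_nonneg x r
    unfold RNet.Fproduct at h
    unfold RNet.product
    linarith
  -- R is nonempty (otherwise the network would trivially be a CAF)
  have hRne : Nonempty R := by
    by_contra hemp
    rw [not_nonempty_iff] at hemp
    exact hnCAF ⟨fun r => (hemp.false r).elim,
      fun _ _ => False,
      { toIrrefl := ⟨fun a => (hemp.false a).elim⟩,
        toIsTrans := ⟨fun a => (hemp.false a).elim⟩ },
      fun r => (hemp.false r).elim⟩
  have hXne : Nonempty X := ⟨(hR1 (Classical.choice hRne)).choose⟩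
  -- height function along prec
  have htrans : ∀ {a b c}, prec a b → prec b c → prec a c :=
    fun hab hbc => hord.toIsTrans.trans _ _ _ hab hbc
  have hirr : ∀ a, ¬ prec a a := hord.toIrrefl.irrefl
  let h : R → ℕ := fun r => (Finset.univ.filter (fun s => prec s r)).card
  have hh : ∀ {a b}, prec a b → h a < h b := by
    intro a b hab
    apply Finset.card_lt_card
    rw [Finset.ssubset_def]
    constructor
    · intro s hs
      simp only [Finset.mem_filter, Finset.mem_univ, true_and] at hs ⊢
      exact htrans hs hab
    · intro hsub
      have ha : a ∈ Finset.univ.filter (fun s => prec s b) := by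
        simp only [Finset.mem_filter, Finset.mem_univ, true_and]; exact hab
      have := hsub ha
      simp only [Finset.mem_filter, Finset.mem_univ, true_and] at this
      exact hirr a this
  -- producers of a species
  let Pset : X → Finset R := fun x =>
    Finset.univ.filter (fun r => N.Fproduct x r ∧ ¬ N.Freactant x r)
  have hPmem : ∀ {x r}, r ∈ Pset x ↔ N.Fproduct x r ∧ ¬ N.Freactant x r := by
    intro x r
    simp [Pset]
  -- q x : a height-minimal producer of x
  have hqex : ∀ x : X, ∃ r' : R, (Pset x).Nonempty →
      (r' ∈ Pset x ∧ ∀ s ∈ Pset x, h r' ≤ h s) := by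
    intro x
    by_cases hx : (Pset x).Nonempty
    · obtain ⟨r', hr', hmin⟩ := Finset.exists_min_image (Pset x) h hx
      exact ⟨r', fun _ => ⟨hr', hmin⟩⟩
    · exact ⟨Classical.choice hRne, fun hn => absurd hn hx⟩
  choose q hq using hqex
  -- the set of constructively generable reactions
  let Gstar : Set R := {r : R | ∃ n, r ∈ N.gsets F n}
  -- if everything is generable, we get a CAF
  have hGstar_CAF : (∀ r, r ∈ Gstar) → IsCAF N F := by
    intro hall
    refine ⟨hR1, fun a b => Nat.find (hall a) < Nat.find (hall b),
      { toIrrefl := ⟨fun a => lt_irrefl _⟩,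
        toIsTrans := ⟨fun a b c hab hbc => lt_trans hab hbc⟩ }, ?_⟩
    intro r x hneed hxF
    have hspec := Nat.find_spec (hall r)
    rcases hn : Nat.find (hall r) with _ | m
    · rw [hn] at hspec
      exact absurd hspec (by simp [RNet.gsets])
    · rw [hn] at hspec
      obtain ⟨r', hr'm, h1, h2⟩ := hspec x hxF hneed
      refine ⟨r', ?_, h1, h2⟩
      have : Nat.find (hall r') ≤ m := Nat.find_le hr'm
      omega
  -- non-generable reactions exist
  have hB0 : ∃ r₀, r₀ ∉ Gstar := by
    by_contra hc
    push_neg at hc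
    exact hnCAF (hGstar_CAF hc)
  -- each non-generable reaction has a non-food needed species all of whose
  -- producers are non-generable
  have claim : ∀ r, r ∉ Gstar → ∃ x, x ∉ F ∧ (N.Freactant x r ∨ N.Fcatalyst x r) ∧
      ∀ r' ∈ Pset x, r' ∉ Gstar := by
    intro r hr
    by_contra hc
    push_neg at hc
    have hsel : ∀ x : X, ∃ n : ℕ, x ∉ F → (N.Freactant x r ∨ N.Fcatalyst x r) →
        ∃ r' ∈ N.gsets F n, N.Fproduct x r' ∧ ¬ N.Freactant x r' := by
      intro x
      by_cases hx : x ∉ F ∧ (N.Freactant x r ∨ N.Fcatalyst x r)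
      · obtain ⟨r', hrP, hrG⟩ := hc x hx.1 hx.2
        obtain ⟨n, hn⟩ := hrG
        exact ⟨n, fun _ _ => ⟨r', hn, (hPmem.mp hrP)⟩⟩
      · exact ⟨0, fun h1 h2 => absurd ⟨h1, h2⟩ hx⟩
    choose nn hnn using hsel
    have hmem : r ∈ N.gsets F ((Finset.univ.sup nn) + 1) := by
      simp only [RNet.gsets, Set.mem_setOf_eq]
      intro x hx hneed
      obtain ⟨r', hr', hp⟩ := hnn x hx hneed
      exact ⟨r', N.gsets_mono F (Finset.le_sup (Finset.mem_univ x)) hr', hp⟩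
    exact hr ⟨_, hmem⟩
  -- totalized witness function
  have hwex : ∀ r : R, ∃ x : X, r ∉ Gstar →
      (x ∉ F ∧ (N.Freactant x r ∨ N.Fcatalyst x r) ∧ ∀ r' ∈ Pset x, r' ∉ Gstar) := by
    intro r
    by_cases hr : r ∉ Gstar
    · obtain ⟨x, hx⟩ := claim r hr
      exact ⟨x, fun _ => hx⟩
    · exact ⟨Classical.choice hXne, fun hn => absurd hn hr⟩
  choose w hw using hwex
  -- producers of witnesses exist
  have hPw : ∀ r, r ∉ Gstar → (Pset (w r)).Nonempty := by
    intro r hr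
    obtain ⟨hxF, hneed, _⟩ := hw r hr
    rcases hneed with hre | hca
    · obtain ⟨r', _, h1, h2⟩ := hR3 r (w r) hre hxF
      exact ⟨r', hPmem.mpr ⟨h1, h2⟩⟩
    · obtain ⟨r', h1, h2⟩ := hR2 r (w r) hca hxF
      exact ⟨r', hPmem.mpr ⟨h1, h2⟩⟩
  have hq' : ∀ r, r ∉ Gstar →
      (N.Fproduct (w r) (q (w r)) ∧ ¬ N.Freactant (w r) (q (w r))) := by
    intro r hr
    exact hPmem.mp (hq (w r) (hPw r hr)).1
  -- the step function
  let ff : R → R := fun r => q (w r)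
  have hfB : ∀ r, r ∉ Gstar → ff r ∉ Gstar := by
    intro r hr
    exact (hw r hr).2.2 _ (hq (w r) (hPw r hr)).1
  -- KEY: the minimal producer of a non-food species is lower than any
  -- reaction having it as F-reactant
  have hkey : ∀ x r, x ∉ F → (Pset x).Nonempty → N.Freactant x r → h (q x) < h r := by
    intro x r hxF hne hre
    obtain ⟨r', hpr, h1, h2⟩ := hR3 r x hre hxF
    exact lt_of_le_of_lt ((hq x hne).2 r' (hPmem.mpr ⟨h1, h2⟩)) (hh hpr)
  -- find a cycle of ff inside the non-generable reactions
  obtain ⟨r₀, hr₀⟩ := hB0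
  have hgB : ∀ i, ff^[i] r₀ ∉ Gstar := by
    intro i
    induction i with
    | zero => exact hr₀
    | succ i ih =>
      rw [Function.iterate_succ_apply']
      exact hfB _ ih
  have hex2 : ∃ i j, i < j ∧ ff^[i] r₀ = ff^[j] r₀ := by
    obtain ⟨i, j, hij, hgij⟩ :=
      Finite.exists_ne_map_eq_of_infinite (fun i : ℕ => ff^[i] r₀)
    rcases lt_or_gt_of_ne hij with hlt | hgt
    · exact ⟨i, j, hlt, hgij⟩
    · exact ⟨j, i, hgt, hgij.symm⟩
  obtain ⟨i, j, hij, hgij⟩ := hex2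
  set a := ff^[i] r₀ with ha_def
  set p := j - i with hp_def
  have hp0 : 0 < p := by omega
  have hcyc : ff^[p] a = a := by
    rw [ha_def, ← Function.iterate_add_apply]
    have hpi : p + i = j := by omega
    rw [hpi]
    exact hgij.symm
  -- the cycle as a finset
  set C : Finset R := (Finset.range p).image (fun t => ff^[t] a) with hC_def
  have hCmem : ∀ {r}, r ∈ C ↔ ∃ t, t < p ∧ ff^[t] a = r := by
    intro r
    simp [hC_def]
  have haC : a ∈ C := hCmem.mpr ⟨0, hp0, rfl⟩
  have hCB : ∀ r ∈ C, r ∉ Gstar := by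
    intro r hr
    obtain ⟨t, ht, rfl⟩ := hCmem.mp hr
    rw [ha_def, ← Function.iterate_add_apply]
    exact hgB (t + i)
  have hfC : ∀ r ∈ C, ff r ∈ C := by
    intro r hr
    obtain ⟨t, ht, rfl⟩ := hCmem.mp hr
    have hstep : ff (ff^[t] a) = ff^[t+1] a := (Function.iterate_succ_apply' ff t a).symm
    rw [hstep]
    rcases eq_or_lt_of_le (Nat.succ_le_of_lt ht) with heq | hlt
    · have heq' : t + 1 = p := heq
      rw [heq', hcyc]; exact haC
    · exact hCmem.mpr ⟨t + 1, hlt, rfl⟩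
  have hfsurj : ∀ r ∈ C, ∃ s ∈ C, ff s = r := by
    intro r hr
    obtain ⟨t, ht, rfl⟩ := hCmem.mp hr
    rcases t with _ | t'
    · refine ⟨ff^[p-1] a, hCmem.mpr ⟨p - 1, by omega, rfl⟩, ?_⟩
      have hstep : ff (ff^[p-1] a) = ff^[p-1+1] a := (Function.iterate_succ_apply' ff (p-1) a).symm
      rw [hstep]
      have hpp : p - 1 + 1 = p := by omega
      rw [hpp, hcyc]
      rfl
    · exact ⟨ff^[t'] a, hCmem.mpr ⟨t', by omega, rfl⟩,
        (Function.iterate_succ_apply' ff t' a).symm⟩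
  have himg : C.image ff = C := by
    apply Finset.Subset.antisymm
    · intro r hr
      obtain ⟨s, hs, rfl⟩ := Finset.mem_image.mp hr
      exact hfC s hs
    · intro r hr
      obtain ⟨s, hs, hfs⟩ := hfsurj r hr
      exact Finset.mem_image.mpr ⟨s, hs, hfs⟩
  have hfInj : Set.InjOn ff ↑C := by
    rw [← Finset.card_image_iff, himg]
  have hwInj : Set.InjOn w ↑C := by
    intro r1 h1 r2 h2 heq
    apply hfInj h1 h2
    show q (w r1) = q (w r2)
    rw [heq]
  -- the species set
  set Xs : Finset X := C.image w with hXs_def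
  have hXsmem : ∀ {m}, m ∈ Xs ↔ ∃ b ∈ C, w b = m := by
    intro m; simp [hXs_def]
  -- summary facts for species of Xs
  have hXfact : ∀ m ∈ Xs, m ∉ F ∧ q m ∈ C ∧ N.Fproduct m (q m) ∧ ¬ N.Freactant m (q m)
      ∧ (Pset m).Nonempty := by
    intro m hm
    obtain ⟨b, hb, rfl⟩ := hXsmem.mp hm
    have hbB := hCB b hb
    refine ⟨(hw b hbB).1, hfC b hb, (hq' b hbB).1, (hq' b hbB).2, hPw b hbB⟩
  refine ⟨C, Xs, ⟨a, haC⟩, ?_, ⟨?_, ?_, ?_⟩, ?_, ?_, ?_⟩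
  -- (2) species are in the support and non-food
  · intro x hx
    obtain ⟨b, hb, rfl⟩ := hXsmem.mp hx
    have hbB := hCB b hb
    exact ⟨⟨b, Finset.mem_coe.mpr hb, Or.inl (hreact_of (hw b hbB).2.1)⟩, (hw b hbB).1⟩
  -- (3a) R1 for the subnetwork
  · intro r
    obtain ⟨x, hx⟩ := hR1 (r : R)
    have hxsupp : x ∈ N.support ↑C :=
      ⟨(r : R), r.2, Or.inl (hreact_of (Or.inr hx))⟩
    exact ⟨⟨x, hxsupp⟩, hx⟩
  -- (3b) R2 for the subnetwork
  · intro r x hcat hxF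
    have hxXs : (x : X) ∈ Xs := not_not.mp hxF
    obtain ⟨hmF, hqC, hFp, hnFr, hPne⟩ := hXfact _ hxXs
    exact ⟨⟨q (x : X), Finset.mem_coe.mpr hqC⟩, hFp, hnFr⟩
  -- (3c) R3 for the subnetwork
  · refine ⟨fun r s => h (r : R) < h (s : R),
      { toIrrefl := ⟨fun a => lt_irrefl _⟩,
        toIsTrans := ⟨fun a b c hab hbc => lt_trans hab hbc⟩ }, ?_⟩
    intro r x hre hxF
    have hxXs : (x : X) ∈ Xs := not_not.mp hxF
    obtain ⟨hmF, hqC, hFp, hnFr, hPne⟩ := hXfact _ hxXs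
    refine ⟨⟨q (x : X), Finset.mem_coe.mpr hqC⟩, ?_, hFp, hnFr⟩
    exact hkey (x : X) (r : R) hmF hPne hre
  -- (4) squareness
  · exact Finset.card_image_of_injOn hwInj
  -- (5) well-formedness
  · intro r hr
    have hbB := hCB r hr
    constructor
    · exact ⟨w r, Finset.mem_image_of_mem w hr, hreact_of (hw r hbB).2.1⟩
    · obtain ⟨s, hs, hfs⟩ := hfsurj r hr
      refine ⟨w s, Finset.mem_image_of_mem w hs, ?_⟩
      have := (hq' s (hCB s hs)).1
      rw [← hfs]
      exact hprod_of this
  -- (6) semipositivity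
  · have hXsne : Xs.Nonempty := ⟨w a, Finset.mem_image_of_mem w haC⟩
    obtain ⟨m₁, hm₁, hmin⟩ := Finset.exists_min_image Xs (fun m => N.σp m (q m)) hXsne
    set δ := N.σp m₁ (q m₁) with hδ_def
    have hδpos : 0 < δ := (hXfact m₁ hm₁).2.2.1
    set K : ℝ := (∑ m ∈ Xs, ∑ r ∈ C, |N.sp m r - N.sm m r|) + 1 with hK_def
    have hsum_nonneg : 0 ≤ ∑ m ∈ Xs, ∑ r ∈ C, |N.sp m r - N.sm m r| :=
      Finset.sum_nonneg fun _ _ => Finset.sum_nonneg fun _ _ => abs_nonneg _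
    have hK1 : (1:ℝ) ≤ K := by rw [hK_def]; linarith
    have hKpos : (0:ℝ) < K := by linarith
    have hKm : ∀ m ∈ Xs, (∑ r ∈ C, |N.sp m r - N.sm m r|) ≤ K := by
      intro m hm
      have := Finset.single_le_sum
        (f := fun m => ∑ r ∈ C, |N.sp m r - N.sm m r|)
        (fun i _ => Finset.sum_nonneg fun _ _ => abs_nonneg _) hm
      rw [hK_def]; linarith
    set ε : ℝ := min 1 (δ / (2 * K)) with hε_def
    have hε0 : 0 < ε := lt_min one_pos (div_pos hδpos (mul_pos two_pos hKpos))
    have hε1 : ε ≤ 1 := min_le_left _ _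
    have hεK : ε * K < δ := by
      have h1 : ε ≤ δ / (2 * K) := min_le_right _ _
      have h2 : ε * K ≤ (δ / (2 * K)) * K := mul_le_mul_of_nonneg_right h1 hKpos.le
      have h3 : (δ / (2 * K)) * K = δ / 2 := by field_simp
      rw [h3] at h2
      have h4 : δ / 2 < δ := by linarith
      exact lt_of_le_of_lt h2 h4
    have hc_eq : ∀ m r, N.sp m r - N.sm m r = N.σp m r - N.σm m r := by
      intro m r
      have h1 := N.sm_eq m r
      have h2 := N.sp_eq m r
      linarith
    refine ⟨fun r => ε ^ h r, fun r _ => pow_pos hε0 _, ?_⟩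
    intro m hm
    obtain ⟨hmF, hqC, hFp, hnFr, hPne⟩ := hXfact m hm
    set p0 := q m with hp0_def
    have hσm0 : N.σm m p0 = 0 :=
      le_antisymm (not_lt.mp hnFr) (N.σm_nonneg m p0)
    have hcp0 : N.sp m p0 - N.sm m p0 = N.σp m p0 := by
      rw [hc_eq, hσm0]; ring
    have hδle : δ ≤ N.σp m p0 := hmin m hm
    -- pointwise bound for the other reactions
    have hterm : ∀ r ∈ C.erase p0,
        -(|N.sp m r - N.sm m r| * (ε ^ h p0 * ε)) ≤ (N.sp m r - N.sm m r) * ε ^ h r := by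
      intro r hr
      rcases le_or_gt 0 (N.sp m r - N.sm m r) with hcn | hcn
      · have h1 : 0 ≤ (N.sp m r - N.sm m r) * ε ^ h r :=
          mul_nonneg hcn (pow_pos hε0 _).le
        have h2 : 0 ≤ |N.sp m r - N.sm m r| * (ε ^ h p0 * ε) :=
          mul_nonneg (abs_nonneg _) (by positivity)
        linarith
      · have hFre : N.Freactant m r := by
          have h1 := hc_eq m r
          have h2 := N.σp_nonneg m r
          unfold RNet.Freactant
          linarith
        have hlt : h p0 < h r := hkey m r hmF hPne hFre
        have hpow : ε ^ h r ≤ ε ^ (h p0 + 1) :=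
          pow_le_pow_of_le_one hε0.le hε1 (by omega)
        have hmul : (N.sp m r - N.sm m r) * (ε ^ (h p0 + 1)) ≤
            (N.sp m r - N.sm m r) * ε ^ h r :=
          mul_le_mul_of_nonpos_left hpow hcn.le
        have habs : |N.sp m r - N.sm m r| = -(N.sp m r - N.sm m r) := abs_of_neg hcn
        rw [habs]
        rw [pow_succ] at hmul
        linarith
    have hsum : (N.sp m p0 - N.sm m p0) * ε ^ h p0 +
        ∑ r ∈ C.erase p0, (N.sp m r - N.sm m r) * ε ^ h r =
        ∑ r ∈ C, (N.sp m r - N.sm m r) * ε ^ h r :=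
      Finset.add_sum_erase C (fun r => (N.sp m r - N.sm m r) * ε ^ h r) hqC
    have hsum_ge : ∑ r ∈ C.erase p0, -(|N.sp m r - N.sm m r| * (ε ^ h p0 * ε)) ≤
        ∑ r ∈ C.erase p0, (N.sp m r - N.sm m r) * ε ^ h r :=
      Finset.sum_le_sum hterm
    have hneg_sum : ∑ r ∈ C.erase p0, -(|N.sp m r - N.sm m r| * (ε ^ h p0 * ε)) =
        -((∑ r ∈ C.erase p0, |N.sp m r - N.sm m r|) * (ε ^ h p0 * ε)) := by
      rw [Finset.sum_neg_distrib, Finset.sum_mul]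
    have hA : (∑ r ∈ C.erase p0, |N.sp m r - N.sm m r|) ≤ K := by
      refine le_trans ?_ (hKm m hm)
      exact Finset.sum_le_sum_of_subset_of_nonneg (Finset.erase_subset _ _)
        (fun _ _ _ => abs_nonneg _)
    have hAnn : 0 ≤ ∑ r ∈ C.erase p0, |N.sp m r - N.sm m r| :=
      Finset.sum_nonneg fun _ _ => abs_nonneg _
    have e1 : δ * ε ^ h p0 ≤ (N.sp m p0 - N.sm m p0) * ε ^ h p0 := by
      apply mul_le_mul_of_nonneg_right _ (pow_pos hε0 _).le
      rw [hcp0]; exact hδle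
    have e3 : (∑ r ∈ C.erase p0, |N.sp m r - N.sm m r|) * (ε ^ h p0 * ε) ≤
        K * (ε ^ h p0 * ε) :=
      mul_le_mul_of_nonneg_right hA (by positivity)
    have e4 : K * (ε ^ h p0 * ε) = (ε * K) * ε ^ h p0 := by ring
    have e5 : (ε * K) * ε ^ h p0 < δ * ε ^ h p0 :=
      mul_lt_mul_of_pos_right hεK (pow_pos hε0 _)
    rw [← hsum]
    have hE := le_trans (le_of_eq hneg_sum.symm) hsum_ge
    linarith
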